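/- For all integers z₀, …, z₁₅, the group determinant of G = C₂² ⋊ C₄ factors as D_G(z₀, z₁, …, z₁₅) = D_{4×2}(z₀+z₈, z₁+z₉, …, z₇+z₁₅) · F(z₀−z₈, z₁−z₉, …, z₇−z₁₅)². -/

import Mathlib

/-- The group `C₂² ⋊ C₄ = ⟨g₁,g₂,g₃ ∣ g₁² = g₂² = g₃⁴ = e, g₁g₂ = g₂g₁, g₁g₃ = g₃g₁,
g₂g₃ = g₃g₂g₁⟩`; the element `g₁^r g₂^s g₃^t` is represented by `⟨r, s, t⟩`. -/
@[ext] structure GG where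
  r : ZMod 2
  s : ZMod 2
  t : ZMod 4
deriving DecidableEq, Fintype

/-- Reduction `ZMod 4 → ZMod 2`. -/
def pr : ZMod 4 →+* ZMod 2 := ZMod.castHom (show (2:ℕ) ∣ 4 by norm_num) (ZMod 2)

instance : Mul GG := ⟨fun a b => ⟨a.r + b.r + pr a.t * b.s, a.s + b.s, a.t + b.t⟩⟩
instance : One GG := ⟨⟨0, 0, 0⟩⟩
instance : Inv GG := ⟨fun a => ⟨a.r + pr a.t * a.s, -a.s, -a.t⟩⟩

lemma gmul_def (a b : GG) : a * b = ⟨a.r + b.r + pr a.t * b.s, a.s + b.s, a.t + b.t⟩ := rfl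
lemma ginv_def (a : GG) : a⁻¹ = ⟨a.r + pr a.t * a.s, -a.s, -a.t⟩ := rfl
lemma gone_def : (1 : GG) = ⟨0, 0, 0⟩ := rfl

instance : Group GG where
  mul_assoc a b c := by
    simp only [gmul_def, map_add]
    ext <;> simp <;> ring
  one_mul a := by simp [gmul_def, gone_def]
  mul_one a := by simp [gmul_def, gone_def]
  inv_mul_cancel a := by
    simp only [ginv_def, gmul_def, gone_def]
    ext <;> simp
    · ring_nf
      have h2 : (2 : ZMod 2) = 0 := rfl
      rw [h2, mul_zero]
      simp
    · generalize a.s = x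
      revert x
      decide

/-- The index `j = t + 4s + 8r` of the element `g₁^r g₂^s g₃^t`. -/
def gidx (a : GG) : Fin 16 :=
  ⟨a.t.val + 4 * a.s.val + 8 * a.r.val, by
    have h1 := a.t.val_lt
    have h2 := a.s.val_lt
    have h3 := a.r.val_lt
    omega⟩

/-- The group determinant `D_G(z₀, …, z₁₅) = det (z_{g h⁻¹})_{g,h ∈ G}` of `G = C₂² ⋊ C₄`. -/
noncomputable def DG (z : Fin 16 → ℤ) : ℤ :=
  Matrix.det (Matrix.of fun g h : GG => z (gidx (g * h⁻¹)))

/-- The group determinant `D_{4×2}(y₀, …, y₇) = det (y_{g h⁻¹})_{g,h ∈ C₄ × C₂}` of `C₄ × C₂`,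
where the element `(r mod 4, s mod 2)` is indexed by `j = r + 4s`. -/
def D4x2 (y0 y1 y2 y3 y4 y5 y6 y7 : ℤ) : ℤ :=
  Matrix.det (Matrix.of fun g h : Fin 4 × Fin 2 =>
    ![![y0, y1, y2, y3], ![y4, y5, y6, y7]] (g.2 - h.2) (g.1 - h.1))

/-- `f(x, y, z, w) = x² + y² - z² - w²`. -/
def fP (x y z w : ℤ) : ℤ := x ^ 2 + y ^ 2 - z ^ 2 - w ^ 2

/-- `F(w₀,…,w₇) = f(w₀-w₂, w₁-w₃, w₄-w₆, w₅-w₇) ⬝ f(w₅+w₇, w₀+w₂, w₁+w₃, w₄+w₆)`. -/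
def FP (w0 w1 w2 w3 w4 w5 w6 w7 : ℤ) : ℤ :=
  fP (w0 - w2) (w1 - w3) (w4 - w6) (w5 - w7) * fP (w5 + w7) (w0 + w2) (w1 + w3) (w4 + w6)

/-! ### Auxiliary machinery for the factorization -/

/-- The inverse of `gidx`, as an equivalence `Fin 16 ≃ GG`. -/
def eG : Fin 16 ≃ GG where
  toFun j := ⟨(((j : ℕ) / 8 : ℕ) : ZMod 2), ((((j : ℕ) / 4) % 2 : ℕ) : ZMod 2),
    (((j : ℕ) % 4 : ℕ) : ZMod 4)⟩
  invFun := gidx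
  left_inv := by decide
  right_inv := by decide

/-- Splitting of the element indices into the two cosets of the central subgroup `⟨g₁⟩`. -/
def eS : Fin 8 ⊕ Fin 8 ≃ GG := finSumFinEquiv.trans eG

/-- Index table for the top-left block. -/
def tA (i j : Fin 8) : Fin 16 := gidx (eS (Sum.inl i) * (eS (Sum.inl j))⁻¹)

/-- Index table for the top-right block. -/
def tB (i j : Fin 8) : Fin 16 := gidx (eS (Sum.inl i) * (eS (Sum.inr j))⁻¹)

/-- Second-level splitting of `Fin 8` along the action of the central element `g₃²`. -/
def e8 : Fin 4 ⊕ Fin 4 ≃ Fin 8 where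
  toFun := Sum.elim ![0, 1, 4, 5] ![2, 3, 6, 7]
  invFun := ![Sum.inl 0, Sum.inl 1, Sum.inr 0, Sum.inr 1, Sum.inl 2, Sum.inl 3, Sum.inr 2,
    Sum.inr 3]
  left_inv := by decide
  right_inv := by decide

def tC1 (i j : Fin 4) : Fin 16 := tA (e8 (Sum.inl i)) (e8 (Sum.inl j))
def tC2 (i j : Fin 4) : Fin 16 := tB (e8 (Sum.inl i)) (e8 (Sum.inl j))
def tD1 (i j : Fin 4) : Fin 16 := tA (e8 (Sum.inl i)) (e8 (Sum.inr j))
def tD2 (i j : Fin 4) : Fin 16 := tB (e8 (Sum.inl i)) (e8 (Sum.inr j))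

/-- The indexing equivalence `Fin 4 × Fin 2 ≃ Fin 8`, `(r, s) ↦ r + 4s`. -/
def p42 : Fin 4 × Fin 2 ≃ Fin 8 where
  toFun g := ⟨(g.1 : ℕ) + 4 * (g.2 : ℕ), by have := g.1.isLt; have := g.2.isLt; omega⟩
  invFun j := (⟨(j : ℕ) % 4, by omega⟩, ⟨(j : ℕ) / 4, by have := j.isLt; omega⟩)
  left_inv := by decide
  right_inv := by decide

/-- `[[A,B],[B,A]]` determinant factorization. -/
lemma det_ABBA {n : ℕ} (A B : Matrix (Fin n) (Fin n) ℤ) :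
    (Matrix.fromBlocks A B B A).det = (A + B).det * (A - B).det := by
  have h : Matrix.fromBlocks A B B A =
      Matrix.fromBlocks 1 1 0 1 * Matrix.fromBlocks (A - B) 0 B (A + B) *
        Matrix.fromBlocks 1 (-1) 0 1 := by
    rw [Matrix.fromBlocks_multiply, Matrix.fromBlocks_multiply]
    rw [Matrix.fromBlocks_inj]
    refine ⟨?_, ?_, ?_, ?_⟩ <;> simp <;> abel
  rw [h, Matrix.det_mul, Matrix.det_mul, Matrix.det_fromBlocks_zero₂₁,
    Matrix.det_fromBlocks_zero₂₁, Matrix.det_fromBlocks_zero₁₂, Matrix.det_one]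
  ring

/-- Explicit expansion of a `4 × 4` determinant. -/
lemma det_fin_four (a00 a01 a02 a03 a10 a11 a12 a13 a20 a21 a22 a23 a30 a31 a32 a33 : ℤ) :
    Matrix.det !![a00,a01,a02,a03; a10,a11,a12,a13; a20,a21,a22,a23; a30,a31,a32,a33] =
      a00*(a11*(a22*a33 - a23*a32) - a12*(a21*a33 - a23*a31) + a13*(a21*a32 - a22*a31))
    - a01*(a10*(a22*a33 - a23*a32) - a12*(a20*a33 - a23*a30) + a13*(a20*a32 - a22*a30))
    + a02*(a10*(a21*a33 - a23*a31) - a11*(a20*a33 - a23*a30) + a13*(a20*a31 - a21*a30))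
    - a03*(a10*(a21*a32 - a22*a31) - a11*(a20*a32 - a22*a30) + a12*(a20*a31 - a21*a30)) := by
  simp [Matrix.det_succ_row_zero, Fin.sum_univ_succ,
    show ((2:Fin 4).succAbove 2) = 3 from rfl, show (Fin.castSucc (2:Fin 3)) = (2:Fin 4) from rfl,
    show ((1:Fin 4).succAbove 2) = 3 from rfl, show ((3:Fin 4).succAbove 2) = 2 from rfl]
  ring

/-- Structural factorization of the group determinant of `G` into three smaller determinants. -/
lemma structural (z : Fin 16 → ℤ) :
    DG z =
      (Matrix.of fun i j : Fin 8 => z (tA i j) + z (tB i j)).det *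
      ((Matrix.of fun i j : Fin 4 => z (tC1 i j) - z (tC2 i j) + (z (tD1 i j) - z (tD2 i j))).det *
       (Matrix.of fun i j : Fin 4 =>
          z (tC1 i j) - z (tC2 i j) - (z (tD1 i j) - z (tD2 i j))).det) := by
  have h2 : (Matrix.of fun g h : GG => z (gidx (g * h⁻¹))).submatrix eS eS =
      Matrix.fromBlocks (Matrix.of fun i j => z (tA i j)) (Matrix.of fun i j => z (tB i j))
        (Matrix.of fun i j => z (tB i j)) (Matrix.of fun i j => z (tA i j)) := by
    have hBA : ∀ i j : Fin 8, gidx (eS (Sum.inr i) * (eS (Sum.inl j))⁻¹) = tB i j := by decide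
    have hAA : ∀ i j : Fin 8, gidx (eS (Sum.inr i) * (eS (Sum.inr j))⁻¹) = tA i j := by decide
    ext i j
    cases i with
    | inl i =>
      cases j with
      | inl j => rfl
      | inr j => rfl
    | inr i =>
      cases j with
      | inl j => exact congrArg z (hBA i j)
      | inr j => exact congrArg z (hAA i j)
  have h4 : ((Matrix.of fun i j : Fin 8 => z (tA i j) - z (tB i j)).submatrix e8 e8) =
      Matrix.fromBlocks (Matrix.of fun i j => z (tC1 i j) - z (tC2 i j))
        (Matrix.of fun i j => z (tD1 i j) - z (tD2 i j))
        (Matrix.of fun i j => z (tD1 i j) - z (tD2 i j))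
        (Matrix.of fun i j => z (tC1 i j) - z (tC2 i j)) := by
    have k1 : ∀ i j : Fin 4,
        tA (e8 (Sum.inr i)) (e8 (Sum.inl j)) = tD1 i j ∧
        tB (e8 (Sum.inr i)) (e8 (Sum.inl j)) = tD2 i j ∧
        tA (e8 (Sum.inr i)) (e8 (Sum.inr j)) = tC1 i j ∧
        tB (e8 (Sum.inr i)) (e8 (Sum.inr j)) = tC2 i j := by decide
    ext i j
    cases i with
    | inl i =>
      cases j with
      | inl j => rfl
      | inr j => rfl
    | inr i =>
      cases j with
      | inl j =>
        show z (tA (e8 (Sum.inr i)) (e8 (Sum.inl j))) - z (tB (e8 (Sum.inr i)) (e8 (Sum.inl j)))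
          = z (tD1 i j) - z (tD2 i j)
        rw [(k1 i j).1, (k1 i j).2.1]
      | inr j =>
        show z (tA (e8 (Sum.inr i)) (e8 (Sum.inr j))) - z (tB (e8 (Sum.inr i)) (e8 (Sum.inr j)))
          = z (tC1 i j) - z (tC2 i j)
        rw [(k1 i j).2.2.1, (k1 i j).2.2.2]
  calc DG z = ((Matrix.of fun g h : GG => z (gidx (g * h⁻¹))).submatrix eS eS).det :=
        (Matrix.det_submatrix_equiv_self eS _).symm
    _ = (Matrix.fromBlocks (Matrix.of fun i j => z (tA i j)) (Matrix.of fun i j => z (tB i j))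
        (Matrix.of fun i j => z (tB i j)) (Matrix.of fun i j => z (tA i j))).det :=
        congrArg Matrix.det h2
    _ = ((Matrix.of fun i j => z (tA i j)) + (Matrix.of fun i j => z (tB i j))).det *
        ((Matrix.of fun i j => z (tA i j)) - (Matrix.of fun i j => z (tB i j))).det :=
        det_ABBA _ _
    _ = (Matrix.of fun i j : Fin 8 => z (tA i j) + z (tB i j)).det *
        (((Matrix.of fun i j : Fin 8 => z (tA i j) - z (tB i j)).submatrix e8 e8).det) := by
        rw [show (Matrix.of fun i j => z (tA i j)) + (Matrix.of fun i j => z (tB i j)) =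
            Matrix.of fun i j : Fin 8 => z (tA i j) + z (tB i j) from rfl,
          show (Matrix.of fun i j => z (tA i j)) - (Matrix.of fun i j => z (tB i j)) =
            Matrix.of fun i j : Fin 8 => z (tA i j) - z (tB i j) from rfl,
          Matrix.det_submatrix_equiv_self e8]
    _ = _ := by
        rw [h4, det_ABBA,
          show (Matrix.of fun i j => z (tC1 i j) - z (tC2 i j)) +
              (Matrix.of fun i j => z (tD1 i j) - z (tD2 i j)) =
            Matrix.of fun i j : Fin 4 =>
              z (tC1 i j) - z (tC2 i j) + (z (tD1 i j) - z (tD2 i j)) from rfl,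
          show (Matrix.of fun i j => z (tC1 i j) - z (tC2 i j)) -
              (Matrix.of fun i j => z (tD1 i j) - z (tD2 i j)) =
            Matrix.of fun i j : Fin 4 =>
              z (tC1 i j) - z (tC2 i j) - (z (tD1 i j) - z (tD2 i j)) from rfl]

theorem DG_factorization (z0 z1 z2 z3 z4 z5 z6 z7 z8 z9 z10 z11 z12 z13 z14 z15 : ℤ) :
    DG ![z0, z1, z2, z3, z4, z5, z6, z7, z8, z9, z10, z11, z12, z13, z14, z15] =
      D4x2 (z0 + z8) (z1 + z9) (z2 + z10) (z3 + z11)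
          (z4 + z12) (z5 + z13) (z6 + z14) (z7 + z15) *
        FP (z0 - z8) (z1 - z9) (z2 - z10) (z3 - z11)
          (z4 - z12) (z5 - z13) (z6 - z14) (z7 - z15) ^ 2 := by
  have L1 : (Matrix.of fun i j : Fin 8 =>
      ![z0, z1, z2, z3, z4, z5, z6, z7, z8, z9, z10, z11, z12, z13, z14, z15] (tA i j) +
      ![z0, z1, z2, z3, z4, z5, z6, z7, z8, z9, z10, z11, z12, z13, z14, z15] (tB i j)).det =
      D4x2 (z0 + z8) (z1 + z9) (z2 + z10) (z3 + z11)
        (z4 + z12) (z5 + z13) (z6 + z14) (z7 + z15) := by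
    have hmat : (Matrix.of fun i j : Fin 8 =>
        ![z0, z1, z2, z3, z4, z5, z6, z7, z8, z9, z10, z11, z12, z13, z14, z15] (tA i j) +
        ![z0, z1, z2, z3, z4, z5, z6, z7, z8, z9, z10, z11, z12, z13, z14, z15]
          (tB i j)).submatrix p42 p42 =
        Matrix.of (fun g h : Fin 4 × Fin 2 =>
          ![![z0 + z8, z1 + z9, z2 + z10, z3 + z11], ![z4 + z12, z5 + z13, z6 + z14, z7 + z15]]
            (g.2 - h.2) (g.1 - h.1)) := by
      ext ⟨g1, g2⟩ ⟨h1, h2⟩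
      fin_cases g1 <;> fin_cases g2 <;> fin_cases h1 <;> fin_cases h2 <;>
        first | rfl | exact add_comm _ _
    exact (Matrix.det_submatrix_equiv_self p42 _).symm.trans (congrArg Matrix.det hmat)
  have Lp : (Matrix.of fun i j : Fin 4 =>
      ![z0, z1, z2, z3, z4, z5, z6, z7, z8, z9, z10, z11, z12, z13, z14, z15] (tC1 i j) -
      ![z0, z1, z2, z3, z4, z5, z6, z7, z8, z9, z10, z11, z12, z13, z14, z15] (tC2 i j) +
      (![z0, z1, z2, z3, z4, z5, z6, z7, z8, z9, z10, z11, z12, z13, z14, z15] (tD1 i j) -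
       ![z0, z1, z2, z3, z4, z5, z6, z7, z8, z9, z10, z11, z12, z13, z14, z15] (tD2 i j))).det =
      fP (z5 - z13 + (z7 - z15)) (z0 - z8 + (z2 - z10)) (z1 - z9 + (z3 - z11))
        (z4 - z12 + (z6 - z14)) ^ 2 := by
    have hm : (Matrix.of fun i j : Fin 4 =>
        ![z0, z1, z2, z3, z4, z5, z6, z7, z8, z9, z10, z11, z12, z13, z14, z15] (tC1 i j) -
        ![z0, z1, z2, z3, z4, z5, z6, z7, z8, z9, z10, z11, z12, z13, z14, z15] (tC2 i j) +
        (![z0, z1, z2, z3, z4, z5, z6, z7, z8, z9, z10, z11, z12, z13, z14, z15] (tD1 i j) -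
         ![z0, z1, z2, z3, z4, z5, z6, z7, z8, z9, z10, z11, z12, z13, z14, z15] (tD2 i j))) =
      !![z0 - z8 + (z2 - z10), z3 - z11 + (z1 - z9), z4 - z12 + (z6 - z14), z15 - z7 + (z13 - z5);
         z1 - z9 + (z3 - z11), z0 - z8 + (z2 - z10), z13 - z5 + (z15 - z7), z4 - z12 + (z6 - z14);
         z4 - z12 + (z6 - z14), z7 - z15 + (z5 - z13), z0 - z8 + (z2 - z10), z11 - z3 + (z9 - z1);
         z5 - z13 + (z7 - z15), z4 - z12 + (z6 - z14), z9 - z1 + (z11 - z3),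
           z0 - z8 + (z2 - z10)] := by
      ext i j
      fin_cases i <;> fin_cases j <;> rfl
    rw [hm, det_fin_four]
    simp only [fP]
    ring
  have Lm : (Matrix.of fun i j : Fin 4 =>
      ![z0, z1, z2, z3, z4, z5, z6, z7, z8, z9, z10, z11, z12, z13, z14, z15] (tC1 i j) -
      ![z0, z1, z2, z3, z4, z5, z6, z7, z8, z9, z10, z11, z12, z13, z14, z15] (tC2 i j) -
      (![z0, z1, z2, z3, z4, z5, z6, z7, z8, z9, z10, z11, z12, z13, z14, z15] (tD1 i j) -
       ![z0, z1, z2, z3, z4, z5, z6, z7, z8, z9, z10, z11, z12, z13, z14, z15] (tD2 i j))).det =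
      fP (z0 - z8 - (z2 - z10)) (z1 - z9 - (z3 - z11)) (z4 - z12 - (z6 - z14))
        (z5 - z13 - (z7 - z15)) ^ 2 := by
    have hm : (Matrix.of fun i j : Fin 4 =>
        ![z0, z1, z2, z3, z4, z5, z6, z7, z8, z9, z10, z11, z12, z13, z14, z15] (tC1 i j) -
        ![z0, z1, z2, z3, z4, z5, z6, z7, z8, z9, z10, z11, z12, z13, z14, z15] (tC2 i j) -
        (![z0, z1, z2, z3, z4, z5, z6, z7, z8, z9, z10, z11, z12, z13, z14, z15] (tD1 i j) -
         ![z0, z1, z2, z3, z4, z5, z6, z7, z8, z9, z10, z11, z12, z13, z14, z15] (tD2 i j))) =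
      !![z0 - z8 - (z2 - z10), z3 - z11 - (z1 - z9), z4 - z12 - (z6 - z14), z15 - z7 - (z13 - z5);
         z1 - z9 - (z3 - z11), z0 - z8 - (z2 - z10), z13 - z5 - (z15 - z7), z4 - z12 - (z6 - z14);
         z4 - z12 - (z6 - z14), z7 - z15 - (z5 - z13), z0 - z8 - (z2 - z10), z11 - z3 - (z9 - z1);
         z5 - z13 - (z7 - z15), z4 - z12 - (z6 - z14), z9 - z1 - (z11 - z3),
           z0 - z8 - (z2 - z10)] := by
      ext i j
      fin_cases i <;> fin_cases j <;> rfl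
    rw [hm, det_fin_four]
    simp only [fP]
    ring
  rw [structural, Lp, Lm, ← L1]
  simp only [FP]
  ring
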